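/- Run Randomized PivotTracking on a fixed finite request sequence σ from initial center c₀. The evolution of the candidate set C, and hence whether each step is a union step or an intersection step, is deterministic (independent of the algorithm's random choices). Suppose that steps j, j+1, …, j+ε−1 are all union steps and that x ∈ σ_j. Then, for every possible center before step j, the conditional probability that x is the center immediately after step j+ε−1 is at least (1/3)^ε. -/

import Mathlib

/-- Cost of serving request `r` when node `c` is at the center of the star. -/
def serveCost {V : Type*} [DecidableEq V] (c : V) (r : V × V) : ℕ :=
  if c = r.1 ∨ c = r.2 then 1 else 2

/-- One step of Randomized PivotTracking, driven by one uniformly random value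
`ω : Fin 6` of the random tape.  The state is (current center, candidate set).
On request `r = {x₁, x₂}`:
* intersection behavior (`C ∩ {x₁, x₂} ≠ ∅`): `C ← C ∩ {x₁, x₂}`, and if the
  current center is not in the new `C`, migrate an element of `C` to the
  center, breaking ties uniformly at random (via `ω % 2`);
* union behavior: `C ← C ∪ {x₁, x₂}`, and with probability `1/3` each
  (via `ω % 3`) do nothing, migrate `x₁`, or migrate `x₂`. -/
def rptStep {V : Type*} [DecidableEq V] (st : V × Finset V) (r : V × V)
    (ω : Fin 6) : V × Finset V :=
  if (st.2 ∩ {r.1, r.2}).Nonempty then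
    let C' := st.2 ∩ {r.1, r.2}
    (if st.1 ∈ C' then st.1
     else if C' = {r.1, r.2} then (if ω.val % 2 = 0 then r.1 else r.2)
     else if r.1 ∈ C' then r.1 else r.2, C')
  else
    (if ω.val % 3 = 0 then st.1 else if ω.val % 3 = 1 then r.1 else r.2,
      st.2 ∪ {r.1, r.2})

/-- State (center, candidate set) of Randomized PivotTracking just before the
`t`-th request of `σ`, when the random choices are driven by the tape `ω`. -/
def rstate {V : Type*} [DecidableEq V] (c₀ : V) (σ : List (V × V))
    (ω : ℕ → Fin 6) : ℕ → V × Finset V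
  | 0 => (c₀, {c₀})
  | t + 1 => rptStep (rstate c₀ σ ω t) (σ.getD t (c₀, c₀)) (ω t)

/-- Run Randomized PivotTracking from state `st`, on the requests of `σ`
starting at index `t`, driven by the (finite) tape segment `τ`. -/
def runSeg {V : Type*} [DecidableEq V] (c₀ : V) (σ : List (V × V)) :
    V × Finset V → ℕ → List (Fin 6) → V × Finset V
  | st, _, [] => st
  | st, t, w :: τ => runSeg c₀ σ (rptStep st (σ.getD t (c₀, c₀)) w) (t + 1) τ


section Helpers

variable {V : Type*} [DecidableEq V]

lemma rptStep_snd (st : V × Finset V) (r : V × V) (ω : Fin 6) :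
    (rptStep st r ω).2 =
      if (st.2 ∩ {r.1, r.2}).Nonempty then st.2 ∩ {r.1, r.2}
      else st.2 ∪ {r.1, r.2} := by
  unfold rptStep
  split <;> rfl

lemma rstate_snd_eq (c₀ : V) (σ : List (V × V)) (ω ω' : ℕ → Fin 6) (t : ℕ) :
    (rstate c₀ σ ω t).2 = (rstate c₀ σ ω' t).2 := by
  induction t with
  | zero => rfl
  | succ t ih =>
      show (rptStep _ _ _).2 = (rptStep _ _ _).2
      rw [rptStep_snd, rptStep_snd, ih]

lemma keepCenter (c₀ : V) (σ : List (V × V)) (ω₀ : ℕ → Fin 6) :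
    ∀ (τ : List (Fin 6)) (t : ℕ) (c : V),
      (∀ k < τ.length, (rstate c₀ σ ω₀ (t + k)).2 ∩
        {(σ.getD (t + k) (c₀, c₀)).1, (σ.getD (t + k) (c₀, c₀)).2} = ∅) →
      (∀ w ∈ τ, w.val % 3 = 0) →
      runSeg c₀ σ (c, (rstate c₀ σ ω₀ t).2) t τ
        = (c, (rstate c₀ σ ω₀ (t + τ.length)).2) := by
  intro τ
  induction τ with
  | nil => intro t c _ _; simp [runSeg]
  | cons w rest ih =>
      intro t c hE hw
      have h0 : (rstate c₀ σ ω₀ t).2 ∩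
          {(σ.getD t (c₀, c₀)).1, (σ.getD t (c₀, c₀)).2} = ∅ := by
        simpa using hE 0 (by simp)
      have hne : ¬ ((rstate c₀ σ ω₀ t).2 ∩
          {(σ.getD t (c₀, c₀)).1, (σ.getD t (c₀, c₀)).2}).Nonempty := by
        rw [h0]; simp
      have hstep : rptStep (c, (rstate c₀ σ ω₀ t).2) (σ.getD t (c₀, c₀)) w
          = (c, (rstate c₀ σ ω₀ (t + 1)).2) := by
        unfold rptStep
        rw [if_neg hne]
        have hw0 : w.val % 3 = 0 := hw w (by simp)
        rw [if_pos hw0]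
        congr 1
        show _ = (rptStep (rstate c₀ σ ω₀ t) (σ.getD t (c₀, c₀)) (ω₀ t)).2
        rw [rptStep_snd, if_neg hne]
      show runSeg c₀ σ (rptStep (c, (rstate c₀ σ ω₀ t).2) (σ.getD t (c₀, c₀)) w)
          (t + 1) rest = _
      rw [hstep, ih (t + 1) c
        (fun k hk => by
          have := hE (k + 1) (by simpa using Nat.succ_lt_succ hk)
          simpa [Nat.add_assoc, Nat.add_comm 1 k] using this)
        (fun v hv => hw v (List.mem_cons_of_mem _ hv))]
      congr 2
      simp [Nat.add_assoc, Nat.add_comm 1 rest.length]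

end Helpers

/-- Run Randomized PivotTracking on a fixed finite request
sequence `σ` from initial center `c₀`.
(a) The evolution of the candidate set `C` — and hence whether each step is a
union or an intersection step — is deterministic, i.e. independent of the
random tape.
(b) Suppose steps `j, …, j + ε - 1` are all union steps and `x ∈ σⱼ`.  Then
for every possible center `c` before step `j`, the conditional probability —
i.e. the probability over a fresh uniform tape segment `τ : Fin ε → Fin 6` of
the run started from the state `(c, Cⱼ)`, where `Cⱼ` is the (deterministic)
candidate set before step `j` — that `x` is the center immediately after step
`j + ε - 1` is at least `(1/3)^ε`. -/
theorem randomizedPivotTracking_union_run_prob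
    {V : Type*} [DecidableEq V] [Fintype V] (hn : 3 ≤ Fintype.card V)
    (c₀ : V) (σ : List (V × V)) (hσ : ∀ r ∈ σ, r.1 ≠ r.2) :
    (∀ ω ω' : ℕ → Fin 6, ∀ t : ℕ,
      (rstate c₀ σ ω t).2 = (rstate c₀ σ ω' t).2) ∧
    (∀ j ε : ℕ, 1 ≤ ε → j + ε ≤ σ.length →
      (∀ (ω : ℕ → Fin 6) (t : ℕ), j ≤ t → t < j + ε →
        (rstate c₀ σ ω t).2 ∩
          {(σ.getD t (c₀, c₀)).1, (σ.getD t (c₀, c₀)).2} = ∅) →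
      ∀ x : V, (x = (σ.getD j (c₀, c₀)).1 ∨ x = (σ.getD j (c₀, c₀)).2) →
      ∀ (c : V) (ω₀ : ℕ → Fin 6),
        ((1 : ℚ) / 3) ^ ε ≤
          ((Finset.univ.filter fun τ : Fin ε → Fin 6 =>
              (runSeg c₀ σ (c, (rstate c₀ σ ω₀ j).2) j (List.ofFn τ)).1 = x).card : ℚ)
            / 6 ^ ε) := by
  constructor
  · exact fun ω ω' t => rstate_snd_eq c₀ σ ω ω' t
  intro j ε hε hlen hU x hx c ω₀
  obtain ⟨ε', rfl⟩ : ∃ ε', ε = ε' + 1 := ⟨ε - 1, by omega⟩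
  set r := σ.getD j (c₀, c₀) with hr
  -- choose m according to which coordinate x is
  obtain ⟨m, hm12, hmx⟩ : ∃ m : ℕ, (m = 1 ∨ m = 2) ∧
      (∀ w : Fin 6, w.val % 3 = m →
        (if w.val % 3 = 0 then c else if w.val % 3 = 1 then r.1 else r.2) = x) := by
    rcases hx with h | h
    · exact ⟨1, Or.inl rfl, fun w hw => by rw [hw]; simp [← h]⟩
    · exact ⟨2, Or.inr rfl, fun w hw => by rw [hw]; simp [← h]⟩
  set G : Finset (Fin (ε' + 1) → Fin 6) :=
    Fintype.piFinset (fun k : Fin (ε' + 1) =>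
      Finset.univ.filter fun w : Fin 6 => w.val % 3 = if (k : ℕ) = 0 then m else 0)
    with hG
  have hGcard : G.card = 2 ^ (ε' + 1) := by
    rw [hG, Fintype.card_piFinset]
    have hcard : ∀ k : Fin (ε' + 1),
        (Finset.univ.filter fun w : Fin 6 =>
          w.val % 3 = if (k : ℕ) = 0 then m else 0).card = 2 := by
      intro k
      rcases hm12 with rfl | rfl <;> by_cases hk : (k : ℕ) = 0 <;>
        simp [hk] <;> decide
    simp only [hcard]
    simp
  have hsub : G ⊆ Finset.univ.filter fun τ : Fin (ε' + 1) → Fin 6 =>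
      (runSeg c₀ σ (c, (rstate c₀ σ ω₀ j).2) j (List.ofFn τ)).1 = x := by
    intro τ hτ
    rw [Fintype.mem_piFinset] at hτ
    simp only [Finset.mem_filter, Finset.mem_univ, true_and]
    have hτ0 : (τ 0).val % 3 = m := by
      have := hτ 0; simp at this; exact this
    have hτs : ∀ i : Fin ε', (τ i.succ).val % 3 = 0 := by
      intro i
      have := hτ i.succ
      simp [Fin.val_succ] at this
      exact this
    rw [List.ofFn_succ]
    show (runSeg c₀ σ (rptStep (c, (rstate c₀ σ ω₀ j).2) (σ.getD j (c₀, c₀)) (τ 0))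
        (j + 1) (List.ofFn fun i => τ i.succ)).1 = x
    have h0 : (rstate c₀ σ ω₀ j).2 ∩ {r.1, r.2} = ∅ := by
      simpa [hr] using hU ω₀ j le_rfl (by omega)
    have hne : ¬ ((rstate c₀ σ ω₀ j).2 ∩ {r.1, r.2}).Nonempty := by
      rw [h0]; simp
    have hstep : rptStep (c, (rstate c₀ σ ω₀ j).2) (σ.getD j (c₀, c₀)) (τ 0)
        = (x, (rstate c₀ σ ω₀ (j + 1)).2) := by
      unfold rptStep
      rw [if_neg (by simpa [hr] using hne)]
      have hxeq := hmx (τ 0) hτ0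
      simp only at hxeq ⊢
      rw [show (if (τ 0).val % 3 = 0 then c
          else if (τ 0).val % 3 = 1 then (σ.getD j (c₀, c₀)).1
          else (σ.getD j (c₀, c₀)).2) = x from by simpa [hr] using hxeq]
      congr 1
      show _ = (rptStep (rstate c₀ σ ω₀ j) (σ.getD j (c₀, c₀)) (ω₀ j)).2
      rw [rptStep_snd, if_neg (by simpa [hr] using hne)]
    rw [hstep]
    rw [keepCenter c₀ σ ω₀ (List.ofFn fun i => τ i.succ) (j + 1) x
      (fun k hk => by
        simp only [List.length_ofFn] at hk
        exact hU ω₀ (j + 1 + k) (by omega) (by omega))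
      (fun w hw => by
        rw [List.mem_ofFn] at hw
        obtain ⟨i, rfl⟩ := hw
        exact hτs i)]
  have hcardle : (2 : ℚ) ^ (ε' + 1) ≤
      ((Finset.univ.filter fun τ : Fin (ε' + 1) → Fin 6 =>
        (runSeg c₀ σ (c, (rstate c₀ σ ω₀ j).2) j (List.ofFn τ)).1 = x).card : ℚ) := by
    have := Finset.card_le_card hsub
    rw [hGcard] at this
    exact_mod_cast this
  have h6 : (0 : ℚ) < 6 ^ (ε' + 1) := by positivity
  rw [le_div_iff₀ h6]
  calc ((1 : ℚ) / 3) ^ (ε' + 1) * 6 ^ (ε' + 1)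
      = ((1 / 3 : ℚ) * 6) ^ (ε' + 1) := by rw [mul_pow]
    _ = (2 : ℚ) ^ (ε' + 1) := by norm_num
    _ ≤ _ := hcardle
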